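/- Let X be a finite set with |X| = r where r ≥ 3, and fix x ∈ X. Then A and A* are invertible, and the matrix C = A⁻¹A*⁻¹AA* satisfies: C x̂ = (1−r)·x̂; C 𝟙 = (1−r)⁻¹·𝟙; and C v = v for every v ∈ ℂ^X with v(x) = 0 and Σ_{y ∈ X} v(y) = 0. In particular, C is diagonalizable with eigenvalues 1−r, (1−r)⁻¹, and 1, whose eigenspaces are span{x̂}, span{𝟙}, and {v : v(x) = 0, Σ_y v(y) = 0}, respectively. -/

import Mathlib

/-- The all-ones matrix `J` on index set `X`. -/
def Jmat (X : Type*) : Matrix X X ℂ := Matrix.of fun _ _ => 1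

/-- The 0-th dual idempotent `E₀*` with respect to the base vertex `x`. -/
def E0s (X : Type*) [DecidableEq X] (x : X) : Matrix X X ℂ :=
  Matrix.diagonal fun y => if y = x then 1 else 0

/-- The adjacency matrix `A = J - I` of the complete graph `K_r`. -/
def Amat (X : Type*) [DecidableEq X] : Matrix X X ℂ := Jmat X - 1

/-- The dual adjacency matrix `A* = r E₀* - I` of `K_r` with respect to `x`. -/
def AmatStar (X : Type*) [DecidableEq X] (r : ℕ) (x : X) : Matrix X X ℂ :=
  (r : ℂ) • E0s X x - 1

/-- The group commutator `C = A⁻¹ A*⁻¹ A A*`. -/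
noncomputable def Cmat (X : Type*) [Fintype X] [DecidableEq X] (r : ℕ) (x : X) :
    Matrix X X ℂ :=
  (Amat X)⁻¹ * (AmatStar X r x)⁻¹ * Amat X * AmatStar X r x

/-- The vector `x̂` with a one in coordinate `x` and zeros elsewhere. -/
def xhat (X : Type*) [DecidableEq X] (x : X) : X → ℂ := fun y => if y = x then 1 else 0

/-- The all-ones vector `𝟙`. -/
def allOne (X : Type*) : X → ℂ := fun _ => 1

section Helpers

set_option linter.unusedSectionVars false
variable {X : Type*} [Fintype X] [DecidableEq X]

lemma J_mulVec (v : X → ℂ) : (Jmat X).mulVec v = fun _ => ∑ z, v z := by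
  funext y; simp [Jmat, Matrix.mulVec, dotProduct]

lemma E_mulVec (x : X) (v : X → ℂ) :
    (E0s X x).mulVec v = fun y => if y = x then v x else 0 := by
  funext y
  rw [E0s, Matrix.mulVec_diagonal]
  by_cases h : y = x <;> simp [h]

lemma A_mulVec (v : X → ℂ) : (Amat X).mulVec v = fun y => (∑ z, v z) - v y := by
  funext y
  simp [Amat, Matrix.sub_mulVec, J_mulVec]

lemma As_mulVec (r : ℕ) (x : X) (v : X → ℂ) :
    (AmatStar X r x).mulVec v = fun y => (if y = x then (r:ℂ) * v x else 0) - v y := by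
  funext y
  simp [AmatStar, Matrix.sub_mulVec, Matrix.smul_mulVec, E_mulVec]

lemma Ainv_mulVec (c : ℂ) (v : X → ℂ) :
    (c • Jmat X - 1).mulVec v = fun y => c * (∑ z, v z) - v y := by
  funext y
  simp [Matrix.sub_mulVec, Matrix.smul_mulVec, J_mulVec]

lemma Asinv_mulVec (c : ℂ) (x : X) (v : X → ℂ) :
    (c • E0s X x - 1).mulVec v = fun y => (if y = x then c * v x else 0) - v y := by
  funext y
  simp [Matrix.sub_mulVec, Matrix.smul_mulVec, E_mulVec]

lemma A_inv_formula (r : ℕ) (hr : 3 ≤ r) (hcard : Fintype.card X = r) :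
    Amat X * (((r:ℂ)-1)⁻¹ • Jmat X - 1) = 1 ∧
    (((r:ℂ)-1)⁻¹ • Jmat X - 1) * Amat X = 1 := by
  have hJJ : Jmat X * Jmat X = (r:ℂ) • Jmat X := by
    ext i j; simp [Jmat, Matrix.mul_apply, Finset.sum_const, hcard]
  have h1 : (r:ℂ) ≠ 1 := by exact_mod_cast (by omega : r ≠ 1)
  have ht : (r:ℂ) - 1 ≠ 0 := sub_ne_zero.mpr h1
  set c : ℂ := ((r:ℂ)-1)⁻¹ with hc
  have hc0 : c * r - c - 1 = 0 := by rw [hc]; field_simp; ring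
  constructor
  · rw [Amat, sub_mul, mul_sub, mul_sub, one_mul, mul_one, mul_one, Matrix.mul_smul, hJJ,
      smul_smul]
    have : (c * ↑r) • Jmat X - Jmat X - (c • Jmat X - 1)
        = (c * r - 1 - c) • Jmat X + 1 := by module
    rw [this]
    have : c * r - 1 - c = 0 := by linear_combination hc0
    simp [this]
  · rw [Amat, sub_mul, mul_sub, mul_sub, one_mul, mul_one, mul_one, Matrix.smul_mul, hJJ,
      smul_smul]
    have : (c * ↑r) • Jmat X - c • Jmat X - (Jmat X - 1)
        = (c * r - c - 1) • Jmat X + 1 := by module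
    rw [this, hc0]; simp

lemma As_inv_formula (r : ℕ) (hr : 3 ≤ r) (x : X) :
    AmatStar X r x * (((r:ℂ)/((r:ℂ)-1)) • E0s X x - 1) = 1 ∧
    (((r:ℂ)/((r:ℂ)-1)) • E0s X x - 1) * AmatStar X r x = 1 := by
  have hEE : E0s X x * E0s X x = E0s X x := by
    rw [E0s, Matrix.diagonal_mul_diagonal]
    have : (fun y => (if y = x then (1:ℂ) else 0) * (if y = x then 1 else 0))
        = fun y => if y = x then (1:ℂ) else 0 := by
      funext y; by_cases h : y = x <;> simp [h]
    rw [this]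
  have h1 : (r:ℂ) ≠ 1 := by exact_mod_cast (by omega : r ≠ 1)
  have ht : (r:ℂ) - 1 ≠ 0 := sub_ne_zero.mpr h1
  set c : ℂ := (r:ℂ)/((r:ℂ)-1) with hc
  have hc0 : (r:ℂ) * c - (r:ℂ) - c = 0 := by rw [hc]; field_simp; ring
  constructor
  · rw [AmatStar, sub_mul, mul_sub, mul_sub, one_mul, mul_one, mul_one, Matrix.smul_mul,
      Matrix.mul_smul, hEE, smul_smul]
    have : ((r:ℂ) * c) • E0s X x - (r:ℂ) • E0s X x - (c • E0s X x - 1)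
        = ((r:ℂ) * c - (r:ℂ) - c) • E0s X x + 1 := by module
    rw [this, hc0]; simp
  · rw [AmatStar, sub_mul, mul_sub, mul_sub, one_mul, mul_one, mul_one, Matrix.smul_mul,
      Matrix.mul_smul, hEE, smul_smul]
    have : (c * (r:ℂ)) • E0s X x - c • E0s X x - ((r:ℂ) • E0s X x - 1)
        = (c * (r:ℂ) - c - (r:ℂ)) • E0s X x + 1 := by module
    rw [this]
    have : c * (r:ℂ) - c - (r:ℂ) = 0 := by linear_combination hc0
    rw [this]; simp


lemma C_apply (r : ℕ) (hr : 3 ≤ r) (hcard : Fintype.card X = r) (x : X) (v : X → ℂ) :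
    (Cmat X r x).mulVec v = fun y =>
      v y - ((r:ℂ)*((r:ℂ)*(v x) - ∑ z, v z)/((r:ℂ)-1)) * (if y = x then 1 else 0)
        + (r:ℂ)*((v x) - ∑ z, v z)/(((r:ℂ)-1)*((r:ℂ)-1)) := by
  have h1 : (r:ℂ) ≠ 1 := by exact_mod_cast (by omega : r ≠ 1)
  have ht : (r:ℂ) - 1 ≠ 0 := sub_ne_zero.mpr h1
  have hAinv : (Amat X)⁻¹ = ((r:ℂ)-1)⁻¹ • Jmat X - 1 :=
    Matrix.inv_eq_right_inv (A_inv_formula r hr hcard).1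
  have hAsinv : (AmatStar X r x)⁻¹ = ((r:ℂ)/((r:ℂ)-1)) • E0s X x - 1 :=
    Matrix.inv_eq_right_inv (As_inv_formula r hr x).1
  obtain ⟨a, ha⟩ : ∃ a : ℂ, v x = a := ⟨_, rfl⟩
  obtain ⟨s, hs⟩ : ∃ s : ℂ, ∑ z, v z = s := ⟨_, rfl⟩
  set w1 : X → ℂ := fun y => (if y = x then (r:ℂ)*a else 0) - v y with hw1
  set w2 : X → ℂ := fun y => ((r:ℂ)*a - s) - w1 y with hw2
  set w3 : X → ℂ := fun y => (if y = x then ((r:ℂ)/((r:ℂ)-1)) * (a - s) else 0) - w2 y with hw3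
  have hs1 : ∑ z, w1 z = (r:ℂ)*a - s := by
    simp [hw1, Finset.sum_sub_distrib, Finset.sum_ite_eq', hs]
  have hs2 : ∑ z, w2 z = (r:ℂ)*((r:ℂ)*a - s) - ((r:ℂ)*a - s) := by
    simp [hw2, Finset.sum_sub_distrib, hs1, Finset.sum_const, hcard]; ring
  have hw2x : w2 x = a - s := by simp [hw2, hw1, ha]
  have hs3 : ∑ z, w3 z = ((r:ℂ)/((r:ℂ)-1)) * (a - s)
      - ((r:ℂ)*((r:ℂ)*a - s) - ((r:ℂ)*a - s)) := by
    simp [hw3, Finset.sum_sub_distrib, Finset.sum_ite_eq', hs2]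
  have e1 : (AmatStar X r x).mulVec v = w1 := by rw [As_mulVec, ha]
  have e2 : (Amat X).mulVec w1 = w2 := by rw [A_mulVec, hs1]
  have e3 : (((r:ℂ)/((r:ℂ)-1)) • E0s X x - 1).mulVec w2 = w3 := by
    rw [Asinv_mulVec, hw2x]
  have e4 : (((r:ℂ)-1)⁻¹ • Jmat X - 1).mulVec w3
      = fun y => ((r:ℂ)-1)⁻¹ * (∑ z, w3 z) - w3 y := Ainv_mulVec _ _
  rw [Cmat, hAinv, hAsinv, ← Matrix.mulVec_mulVec, ← Matrix.mulVec_mulVec,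
    ← Matrix.mulVec_mulVec, e1, e2, e3, e4]
  funext y
  rw [hs3, ha, hs]
  simp only [hw3, hw2, hw1]
  by_cases hy : y = x <;> simp only [hy, if_true, if_false] <;> field_simp <;> ring

end Helpers

theorem stmt13 (X : Type*) [Fintype X] [DecidableEq X] (r : ℕ) (hr : 3 ≤ r)
    (hcard : Fintype.card X = r) (x : X) :
    IsUnit (Amat X) ∧ IsUnit (AmatStar X r x) ∧
    (Cmat X r x).mulVec (xhat X x) = (1 - (r : ℂ)) • xhat X x ∧
    (Cmat X r x).mulVec (allOne X) = (1 - (r : ℂ))⁻¹ • allOne X ∧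
    (∀ v : X → ℂ, v x = 0 → ∑ y : X, v y = 0 → (Cmat X r x).mulVec v = v) ∧
    -- the eigenspaces of `C` for the eigenvalues `1−r`, `(1−r)⁻¹`, `1` are exactly
    -- `span{x̂}`, `span{𝟙}`, and `{v : v(x) = 0, Σ_y v(y) = 0}`, respectively:
    {v : X → ℂ | (Cmat X r x).mulVec v = (1 - (r : ℂ)) • v} =
      (Submodule.span ℂ ({xhat X x} : Set (X → ℂ)) : Set (X → ℂ)) ∧
    {v : X → ℂ | (Cmat X r x).mulVec v = (1 - (r : ℂ))⁻¹ • v} =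
      (Submodule.span ℂ ({allOne X} : Set (X → ℂ)) : Set (X → ℂ)) ∧
    {v : X → ℂ | (Cmat X r x).mulVec v = v} =
      {v : X → ℂ | v x = 0 ∧ ∑ y : X, v y = 0} := by
  have h1 : (r:ℂ) ≠ 1 := by exact_mod_cast (by omega : r ≠ 1)
  have h0 : (r:ℂ) ≠ 0 := by exact_mod_cast (by omega : r ≠ 0)
  have h2 : (r:ℂ) ≠ 2 := by exact_mod_cast (by omega : r ≠ 2)
  have ht : (r:ℂ) - 1 ≠ 0 := sub_ne_zero.mpr h1
  have ht2 : (r:ℂ) - 2 ≠ 0 := sub_ne_zero.mpr h2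
  have ht' : 1 - (r:ℂ) ≠ 0 := fun h => ht (by linear_combination -h)
  refine ⟨⟨⟨Amat X, _, (A_inv_formula r hr hcard).1, (A_inv_formula r hr hcard).2⟩, rfl⟩,
    ⟨⟨AmatStar X r x, _, (As_inv_formula r hr x).1, (As_inv_formula r hr x).2⟩, rfl⟩,
    ?_, ?_, ?_, ?_, ?_, ?_⟩
  · rw [C_apply r hr hcard]
    funext y
    simp only [xhat, Pi.smul_apply, smul_eq_mul, Finset.sum_ite_eq', Finset.mem_univ, if_true]
    by_cases hy : y = x <;> simp only [hy, if_true, if_false] <;> field_simp <;> ring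
  · rw [C_apply r hr hcard]
    funext y
    simp only [allOne, Pi.smul_apply, smul_eq_mul, Finset.sum_const, Finset.card_univ, hcard, nsmul_eq_mul,
      mul_one]
    by_cases hy : y = x <;> simp only [hy, if_true, if_false] <;> field_simp <;> ring
  · intro v hvx hvs
    rw [C_apply r hr hcard]
    funext y
    rw [hvx, hvs]
    simp
  · ext v
    simp only [Set.mem_setOf_eq, SetLike.mem_coe, Submodule.mem_span_singleton]
    constructor
    · intro hv
      rw [C_apply r hr hcard] at hv
      have hx := congrFun hv x
      have hsum := congrArg (fun w : X → ℂ => ∑ y, w y) hv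
      simp only [Pi.smul_apply, smul_eq_mul, if_true] at hx
      simp only [Pi.smul_apply, smul_eq_mul, Finset.sum_add_distrib, Finset.sum_sub_distrib,
        Finset.sum_ite_eq', Finset.mem_univ, if_true, Finset.sum_const, Finset.card_univ, hcard, nsmul_eq_mul,
        ← Finset.mul_sum] at hsum
      -- derive ∑ v = v x
      have hd : ∑ z, v z = v x := by
        field_simp at hx hsum
        have key : ((∑ z, v z) - v x) *
            (((r:ℂ)-1) * ((r:ℂ)-1) * ((r:ℂ) * ((r:ℂ)-2))) = 0 := by
          linear_combination (↑r - 1) * (hsum - hx)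
        have h3 := mul_ne_zero (mul_ne_zero ht ht) (mul_ne_zero h0 ht2)
        exact sub_eq_zero.mp ((mul_eq_zero.mp key).resolve_right h3)
      refine ⟨v x, ?_⟩
      funext y
      have hy := congrFun hv y
      simp only [Pi.smul_apply, smul_eq_mul] at hy
      rw [hd] at hy
      simp only [xhat, Pi.smul_apply, smul_eq_mul]
      by_cases hyx : y = x
      · simp [hyx]
      · simp only [hyx, if_false, mul_zero]
        have : v y * ((r:ℂ) * ((r:ℂ)-1)) = 0 := by
          field_simp [hyx] at hy
          rw [if_neg hyx] at hy
          have key' : v y * ((r:ℂ) * ((r:ℂ)-1)) * ((r:ℂ) - 1) = 0 := by linear_combination hy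
          exact (mul_eq_zero.mp key').resolve_right ht
        exact ((mul_eq_zero.mp this).resolve_right (mul_ne_zero h0 ht)).symm
    · rintro ⟨c, rfl⟩
      rw [C_apply r hr hcard]
      funext y
      simp only [xhat, Pi.smul_apply, smul_eq_mul, Finset.sum_ite_eq', Finset.mem_univ, if_true,
        mul_ite, mul_one, mul_zero]
      by_cases hy : y = x <;> simp only [hy, if_true, if_false] <;> field_simp <;> ring
  · ext v
    simp only [Set.mem_setOf_eq, SetLike.mem_coe, Submodule.mem_span_singleton]
    constructor
    · intro hv
      rw [C_apply r hr hcard] at hv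
      have hx := congrFun hv x
      simp only [Pi.smul_apply, smul_eq_mul, if_true] at hx
      have hra : (r:ℂ) * v x = ∑ z, v z := by
        have key : ((r:ℂ) * v x - ∑ z, v z) *
            ((r:ℂ) * (((r:ℂ)-1) * ((r:ℂ)-1)) * ((r:ℂ)-2)) = 0 := by
          field_simp at hx
          linear_combination (↑r - 1) * hx
        have h3 := mul_ne_zero (mul_ne_zero h0 (mul_ne_zero ht ht)) ht2
        exact sub_eq_zero.mp ((mul_eq_zero.mp key).resolve_right h3)
      refine ⟨v x, ?_⟩
      funext y
      have hy := congrFun hv y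
      simp only [Pi.smul_apply, smul_eq_mul] at hy
      rw [← hra] at hy
      simp only [sub_self, mul_zero, zero_div, zero_mul, sub_zero] at hy
      simp only [allOne, Pi.smul_apply, smul_eq_mul, mul_one]
      have key : (v x - v y) * ((r:ℂ) * (((r:ℂ)-1) * ((r:ℂ)-1))) = 0 := by
        field_simp at hy
        linear_combination hy
      exact sub_eq_zero.mp
        ((mul_eq_zero.mp key).resolve_right (mul_ne_zero h0 (mul_ne_zero ht ht)))
    · rintro ⟨c, rfl⟩
      rw [C_apply r hr hcard]
      funext y
      simp only [allOne, Pi.smul_apply, smul_eq_mul, mul_one, Finset.sum_const,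
        Finset.card_univ, hcard, nsmul_eq_mul]
      by_cases hy : y = x <;> simp only [hy, if_true, if_false] <;> field_simp <;> ring
  · ext v
    simp only [Set.mem_setOf_eq]
    constructor
    · intro hv
      rw [C_apply r hr hcard] at hv
      obtain ⟨y, hyx⟩ := Fintype.exists_ne_of_one_lt_card (by omega : 1 < Fintype.card X) x
      have hy := congrFun hv y
      have hx := congrFun hv x
      simp only [if_true, if_neg hyx, mul_zero, sub_zero] at hx hy
      have hd : v x = ∑ z, v z := by
        have key : (v x - ∑ z, v z) * (r:ℂ) = 0 := by
          field_simp at hy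
          linear_combination hy
        exact sub_eq_zero.mp ((mul_eq_zero.mp key).resolve_right h0)
      have hx0 : v x = 0 := by
        rw [← hd] at hx
        have key : v x * ((r:ℂ) * ((r:ℂ)-1)) = 0 := by
          field_simp at hx
          have key' : v x * ((r:ℂ) * ((r:ℂ)-1)) * ((r:ℂ) - 1) = 0 := by linear_combination -hx
          exact (mul_eq_zero.mp key').resolve_right ht
        exact (mul_eq_zero.mp key).resolve_right (mul_ne_zero h0 ht)
      exact ⟨hx0, by rw [← hd, hx0]⟩
    · rintro ⟨hvx, hvs⟩
      rw [C_apply r hr hcard]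
      funext y
      rw [hvx, hvs]
      simp
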